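/- For two unit quaternions q, p with q⁻¹p = (w, v), v ≠ 0, the norm of the logarithmic map satisfies ‖Log_q(p)‖ = arccos(w), and this equals the spherical geodesic distance arccos⟨q, p⟩ between q and p viewed as points of S^3 ⊂ ℝ^4. -/

import Mathlib

open RealInnerProductSpace

theorem stmt_16 (q p : Quaternion ℝ) (hq : ‖q‖ = 1) (hp : ‖p‖ = 1)
    (m : Quaternion ℝ) (hm : m = q⁻¹ * p) (him : m.im ≠ 0) :
    ‖(Real.arccos m.re / ‖m.im‖) • m.im‖ = Real.arccos m.re ∧
    Real.arccos m.re = Real.arccos ⟪q, p⟫ := by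
  have hn : ‖m.im‖ ≠ 0 := norm_ne_zero_iff.mpr him
  constructor
  · rw [norm_smul, Real.norm_eq_abs, abs_div, abs_of_nonneg (Real.arccos_nonneg _),
      abs_of_nonneg (norm_nonneg _), div_mul_cancel₀ _ hn]
  · congr 1
    have hq0 : q ≠ 0 := by intro h; simp [h] at hq
    have hinv : q⁻¹ = star q := by
      rw [Quaternion.inv_def]
      have : Quaternion.normSq q = 1 := by
        have := Quaternion.normSq_eq_norm_mul_self q
        rw [hq] at this; simpa using this
      simp [this]
    rw [hm, hinv, Quaternion.inner_def]
    have : star (q * star p) = p * star q := by simp [star_mul]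
    calc (star q * p).re = (star (star q * p)).re := (Quaternion.re_star _).symm
      _ = (star p * q).re := by simp [star_mul]
      _ = (q * star p).re := by
          simp [Quaternion.re_mul]; ring
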